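/- Let M_{A,B} be the commutative monoid given as the quotient of ℕ[A ⊔ B] ⊕ ℕ (with A, B finite sets, A nonempty, and distinguished generator m_π of the last factor) by the relation ∏_{a∈A} m_a = m_π^e for a positive integer e. Then the monoid homomorphism M_{A,B} → e^{-1}ℕ[A] ⊕ ℕ[B] sending m_a ↦ m_a, m_b ↦ m_b, m_π ↦ ∏_a m_a^{1/e} is injective, its image consists of the elements ∏ m_a^{n_a/e}·∏ m_b^{n_b} with n_a, n_b ∈ ℕ such that n_a − n_{a'} ∈ eℤ for all a, a' ∈ A, and consequently M_{A,B} is an integral saturated (fs) monoid. -/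

import Mathlib

/-!
STATEMENT 16: Let `M_{A,B}` be the commutative monoid (written additively here) given as the
quotient of `ℕ[A ⊔ B] ⊕ ℕ` (free commutative monoid on `A ⊔ B` plus a distinguished generator
`m_π`) by the relation `∑_{a ∈ A} m_a = e • m_π`, for finite sets `A ≠ ∅`, `B` and `e ≥ 1`.
The monoid homomorphism `ψ : M_{A,B} → e⁻¹ℕ[A] ⊕ ℕ[B]` sending `m_a ↦ m_a`, `m_b ↦ m_b` and
`m_π ↦ ∏_a m_a^{1/e}` is injective; its image consists of the `∏ m_a^{n_a/e}·∏ m_b^{n_b}` with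
`n_a ≡ n_{a'} (mod e)` for all `a, a' ∈ A`; consequently `M_{A,B}` is integral (cancellative)
and saturated.

Encoding: `e⁻¹ℕ[A]` is identified with `A →₀ ℕ` by measuring exponents in units of `1/e`,
so `ψ(m_a) = e • single a 1`, `ψ(m_π) = ∑_a single a 1`.
-/

open Finsupp

variable (A B : Type) [Fintype A] [Nonempty A] [Fintype B] [DecidableEq A] [DecidableEq B]
  (e : ℕ)

/-- the free commutative monoid `ℕ[A ⊔ B] ⊕ ℕ` -/
abbrev FreeMon := ((A ⊕ B) →₀ ℕ) × ℕ

/-- the defining relation `∑_a m_a = e • m_π` -/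
def rel : FreeMon A B → FreeMon A B → Prop := fun x y =>
  x = (∑ a : A, Finsupp.single (Sum.inl a) 1, 0) ∧ y = (0, e)

/-- the monoid `M_{A,B}` -/
abbrev MAB := (addConGen (rel A B e)).Quotient

/-- the target monoid `e⁻¹ℕ[A] ⊕ ℕ[B]`, with the `A`-exponents in units of `1/e` -/
abbrev Tgt := (A →₀ ℕ) × (B →₀ ℕ)

/-- the underlying homomorphism `ℕ[A ⊔ B] ⊕ ℕ → e⁻¹ℕ[A] ⊕ ℕ[B]`,
`m_a ↦ m_a = e·(m_a^{1/e})`, `m_b ↦ m_b`, `m_π ↦ ∑_a m_a^{1/e}` -/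
noncomputable def smulSumHom : ℕ →+ (A →₀ ℕ) where
  toFun k := k • (∑ a : A, Finsupp.single a 1)
  map_zero' := zero_smul _ _
  map_add' a b := add_smul a b _

noncomputable def eMulHom : (A →₀ ℕ) →+ (A →₀ ℕ) where
  toFun x := e • x
  map_zero' := smul_zero _
  map_add' x y := smul_add _ _ _

noncomputable def baseHom : FreeMon A B →+ Tgt A B :=
  AddMonoidHom.prod
    ((eMulHom A e).comp ((comapDomain.addMonoidHom Sum.inl_injective).comp
        (AddMonoidHom.fst _ _)) +
      (smulSumHom A).comp (AddMonoidHom.snd _ _))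
    ((comapDomain.addMonoidHom Sum.inr_injective).comp (AddMonoidHom.fst _ _))

lemma baseHom_rel : baseHom A B e (∑ a : A, Finsupp.single (Sum.inl a) 1, 0)
    = baseHom A B e ((0 : (A ⊕ B) →₀ ℕ), e) := by
  have h1 : comapDomain.addMonoidHom (M := ℕ) Sum.inl_injective
      (∑ a : A, Finsupp.single (Sum.inl a : A ⊕ B) (1 : ℕ)) = ∑ a : A, Finsupp.single a 1 := by
    rw [map_sum]
    refine Finset.sum_congr rfl fun a _ => ?_
    ext a'
    simp [comapDomain.addMonoidHom, Finsupp.comapDomain_apply, Finsupp.single_apply,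
      Sum.inl.injEq]
  have h2 : comapDomain.addMonoidHom (M := ℕ) Sum.inr_injective
      (∑ a : A, Finsupp.single (Sum.inl a : A ⊕ B) (1 : ℕ)) = 0 := by
    rw [map_sum]
    refine Finset.sum_eq_zero fun a _ => ?_
    ext b
    simp [comapDomain.addMonoidHom, Finsupp.comapDomain_apply, Finsupp.single_apply]
  simp [baseHom, eMulHom, smulSumHom, h1, h2]

-- evaluation lemmas
lemma sumSingle_apply (a : A) : (∑ a' : A, Finsupp.single a' (1:ℕ)) a = 1 := by
  rw [Finsupp.finset_sum_apply]
  simp [Finsupp.single_apply]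

lemma U_apply_inl (a : A) :
    (∑ a' : A, Finsupp.single (Sum.inl a' : A ⊕ B) (1:ℕ)) (Sum.inl a) = 1 := by
  rw [Finsupp.finset_sum_apply]
  simp [Finsupp.single_apply]

lemma U_apply_inr (b : B) :
    (∑ a' : A, Finsupp.single (Sum.inl a' : A ⊕ B) (1:ℕ)) (Sum.inr b) = 0 := by
  rw [Finsupp.finset_sum_apply]
  simp [Finsupp.single_apply]

lemma baseHom_fst (f : (A ⊕ B) →₀ ℕ) (k : ℕ) (a : A) :
    (baseHom A B e (f, k)).1 a = e * f (Sum.inl a) + k := by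
  simp [baseHom, eMulHom, smulSumHom, comapDomain.addMonoidHom, Finsupp.comapDomain_apply,
    sumSingle_apply]

lemma baseHom_snd (f : (A ⊕ B) →₀ ℕ) (k : ℕ) (b : B) :
    (baseHom A B e (f, k)).2 b = f (Sum.inr b) := by
  simp [baseHom, comapDomain.addMonoidHom, Finsupp.comapDomain_apply]

lemma ladder (d : ℕ) (g : (A ⊕ B) →₀ ℕ) (t : ℕ) :
    (addConGen (rel A B e))
      (g + d • (∑ a : A, Finsupp.single (Sum.inl a) 1), t) (g, t + d * e) := by
  induction d generalizing t with
  | zero => simp; exact (addConGen (rel A B e)).refl _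
  | succ d ih =>
      have step : (addConGen (rel A B e))
          ((g + d • (∑ a : A, Finsupp.single (Sum.inl a) 1)) +
            (∑ a : A, Finsupp.single (Sum.inl a) 1), t)
          (g + d • (∑ a : A, Finsupp.single (Sum.inl a) 1), t + e) := by
        have hgen : (addConGen (rel A B e))
            (∑ a : A, Finsupp.single (Sum.inl a) 1, 0) ((0 : (A ⊕ B) →₀ ℕ), e) :=
          AddConGen.Rel.of _ _ ⟨rfl, rfl⟩
        have := (addConGen (rel A B e)).add
          ((addConGen (rel A B e)).refl (g + d • (∑ a : A, Finsupp.single (Sum.inl a) 1), t))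
          hgen
        simpa [Prod.add_def] using this
      have heq : (g + (d + 1) • (∑ a : A, Finsupp.single (Sum.inl a) 1), t)
          = ((g + d • (∑ a : A, Finsupp.single (Sum.inl a) 1)) +
            (∑ a : A, Finsupp.single (Sum.inl a) 1), t) := by
        rw [succ_nsmul, add_assoc]
      rw [heq]
      refine (addConGen (rel A B e)).trans step ?_
      have := ih (t + e)
      have harith : t + e + d * e = t + (d + 1) * e := by ring
      rwa [harith] at this

lemma ker_le_aux (he : 1 ≤ e) (f f' : (A ⊕ B) →₀ ℕ) (k k' : ℕ) (hk : k ≤ k')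
    (hxy : baseHom A B e (f, k) = baseHom A B e (f', k')) :
    (addConGen (rel A B e)) (f, k) (f', k') := by
  have h1 : ∀ a : A, e * f (Sum.inl a) + k = e * f' (Sum.inl a) + k' := by
    intro a
    have := congrArg (fun x : Tgt A B => x.1 a) hxy
    simpa [baseHom_fst] using this
  have h2 : ∀ b : B, f (Sum.inr b) = f' (Sum.inr b) := by
    intro b
    have := congrArg (fun x : Tgt A B => x.2 b) hxy
    simpa [baseHom_snd] using this
  have hepos : 0 < e := he
  have hge : ∀ a : A, f' (Sum.inl a) ≤ f (Sum.inl a) := by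
    intro a
    have := h1 a
    by_contra hlt
    push_neg at hlt
    have : e * f (Sum.inl a) < e * f' (Sum.inl a) :=
      (Nat.mul_lt_mul_left hepos).mpr hlt
    omega
  have hmul : ∀ a : A, e * (f (Sum.inl a) - f' (Sum.inl a)) = k' - k := by
    intro a
    have := h1 a
    have := hge a
    rw [Nat.mul_sub]
    omega
  obtain ⟨a₀⟩ := ‹Nonempty A›
  set d := f (Sum.inl a₀) - f' (Sum.inl a₀) with hd
  have hdall : ∀ a : A, f (Sum.inl a) - f' (Sum.inl a) = d := by
    intro a
    have h := hmul a
    have h0 := hmul a₀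
    exact Nat.eq_of_mul_eq_mul_left hepos (by rw [h, hd, h0])
  have hk' : k' = k + d * e := by
    have := hmul a₀
    rw [← hd, mul_comm] at this
    omega
  have hf : f = f' + d • (∑ a : A, Finsupp.single (Sum.inl a) 1) := by
    ext s
    rcases s with a | b
    · have := hdall a
      have := hge a
      simp only [Finsupp.add_apply, Finsupp.smul_apply, U_apply_inl, smul_eq_mul, mul_one]
      omega
    · simp only [Finsupp.add_apply, Finsupp.smul_apply, U_apply_inr, smul_eq_mul, mul_zero,
        add_zero]
      exact h2 b
  rw [hf, hk']
  exact ladder A B e d f' k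

lemma ker_le (he : 1 ≤ e) (x y : FreeMon A B)
    (hxy : baseHom A B e x = baseHom A B e y) :
    (addConGen (rel A B e)) x y := by
  obtain ⟨f, k⟩ := x
  obtain ⟨f', k'⟩ := y
  rcases le_total k k' with h | h
  · exact ker_le_aux A B e he f f' k k' h hxy
  · exact (addConGen (rel A B e)).symm (ker_le_aux A B e he f' f k' k h hxy.symm)

/-- the induced homomorphism `ψ : M_{A,B} → e⁻¹ℕ[A] ⊕ ℕ[B]` -/
noncomputable def ψ : MAB A B e →+ Tgt A B :=
  AddCon.lift _ (baseHom A B e) (by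
    refine AddCon.addConGen_le.mpr ?_
    rintro x y ⟨rfl, rfl⟩
    exact baseHom_rel A B e)

lemma ψ_coe (x : FreeMon A B) : ψ A B e (x : MAB A B e) = baseHom A B e x := rfl

lemma ψ_injective (he : 1 ≤ e) : Function.Injective (ψ A B e) := by
  intro p q
  refine AddCon.induction_on₂ p q fun x y h => ?_
  exact (AddCon.eq _).mpr (ker_le A B e he x y (by simpa [ψ_coe] using h))

lemma ψ_range (he : 1 ≤ e) :
    Set.range (ψ A B e) = {x : Tgt A B | ∀ a a' : A, x.1 a % e = x.1 a' % e} := by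
  ext x
  constructor
  · rintro ⟨p, rfl⟩
    refine AddCon.induction_on p fun z => ?_
    obtain ⟨f, k⟩ := z
    intro a a'
    simp [ψ_coe, baseHom_fst, Nat.mul_add_mod]
  · rintro hx
    obtain ⟨g, h⟩ := x
    simp only [Set.mem_setOf_eq] at hx
    obtain ⟨a₀, -, hmin⟩ := Finset.exists_min_image Finset.univ (fun a => g a)
      ⟨Classical.arbitrary A, Finset.mem_univ _⟩
    set k := g a₀ with hk
    have hdvd : ∀ a : A, e ∣ g a - k := by
      intro a
      have h1 : k ≡ g a [MOD e] := (hx a a₀).symm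
      have h2 : k ≤ g a := hmin a (Finset.mem_univ a)
      exact (Nat.modEq_iff_dvd' h2).mp h1
    set F : (A ⊕ B) →₀ ℕ :=
      Finsupp.equivFunOnFinite.symm (Sum.elim (fun a => (g a - k) / e) (fun b => h b)) with hF
    have hFl : ∀ a : A, F (Sum.inl a) = (g a - k) / e := fun a => rfl
    have hFr : ∀ b : B, F (Sum.inr b) = h b := fun b => rfl
    refine ⟨((F, k) : FreeMon A B), ?_⟩
    rw [ψ_coe]
    refine Prod.ext ?_ ?_
    · ext a
      show _ = g a
      rw [baseHom_fst, hFl]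
      have := hdvd a
      have := hmin a (Finset.mem_univ a)
      have : e * ((g a - k) / e) = g a - k := Nat.mul_div_cancel' (hdvd a) 
      omega
    · ext b
      rw [baseHom_snd, hFr]

lemma tgt_cancel (p q r : Tgt A B) (h : p + q = p + r) : q = r := by
  refine Prod.ext ?_ ?_
  · ext a
    have := congrArg (fun x : Tgt A B => x.1 a) h
    simpa using this
  · ext b
    have := congrArg (fun x : Tgt A B => x.2 b) h
    simpa using this

theorem statement16 (he : 1 ≤ e) :
    -- injectivity of ψ
    Function.Injective (ψ A B e) ∧
    -- image description: all `A`-exponents congruent mod `e`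
    Set.range (ψ A B e) = {x : Tgt A B | ∀ a a' : A, x.1 a % e = x.1 a' % e} ∧
    -- `M_{A,B}` is integral (cancellative) …
    (∀ x y z : MAB A B e, x + y = x + z → y = z) ∧
    -- … and saturated
    (∀ (x y : MAB A B e) (k : ℕ), 0 < k → (∃ w, k • x = k • y + w) → ∃ u, x = y + u) := by
  have hinj := ψ_injective A B e he
  have hrange := ψ_range A B e he
  refine ⟨hinj, hrange, ?_, ?_⟩
  · intro x y z h
    apply hinj
    have : ψ A B e x + ψ A B e y = ψ A B e x + ψ A B e z := by
      rw [← map_add, ← map_add, h]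
    exact tgt_cancel A B (ψ A B e x) _ _ this
  · intro x y k hk ⟨w, hw⟩
    have hw' : k • ψ A B e x = k • ψ A B e y + ψ A B e w := by
      rw [← map_nsmul, ← map_nsmul, ← map_add, hw]
    set p := ψ A B e x with hp
    set q := ψ A B e y with hq
    -- componentwise inequalities
    have hle1 : ∀ a : A, q.1 a ≤ p.1 a := by
      intro a
      have := congrArg (fun z : Tgt A B => z.1 a) hw'
      simp only [Prod.smul_fst, Prod.fst_add, Finsupp.smul_apply, Finsupp.add_apply,
        smul_eq_mul] at this
      by_contra hlt
      push_neg at hlt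
      have : k * p.1 a < k * q.1 a := Nat.mul_lt_mul_left hk |>.mpr hlt
      omega
    have hle2 : ∀ b : B, q.2 b ≤ p.2 b := by
      intro b
      have := congrArg (fun z : Tgt A B => z.2 b) hw'
      simp only [Prod.smul_snd, Prod.snd_add, Finsupp.smul_apply, Finsupp.add_apply,
        smul_eq_mul] at this
      by_contra hlt
      push_neg at hlt
      have : k * p.2 b < k * q.2 b := Nat.mul_lt_mul_left hk |>.mpr hlt
      omega
    set u : Tgt A B := (p.1 - q.1, p.2 - q.2) with hu
    have hpu : p = q + u := by
      refine Prod.ext ?_ ?_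
      · ext a
        simp only [hu, Prod.fst_add, Finsupp.add_apply, Finsupp.tsub_apply]
        have := hle1 a
        omega
      · ext b
        simp only [hu, Prod.snd_add, Finsupp.add_apply, Finsupp.tsub_apply]
        have := hle2 b
        omega
    have hpS : ∀ a a' : A, p.1 a % e = p.1 a' % e := by
      have : p ∈ Set.range (ψ A B e) := ⟨x, rfl⟩
      rw [hrange] at this
      exact this
    have hqS : ∀ a a' : A, q.1 a % e = q.1 a' % e := by
      have : q ∈ Set.range (ψ A B e) := ⟨y, rfl⟩
      rw [hrange] at this
      exact this
    have huS : u ∈ Set.range (ψ A B e) := by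
      rw [hrange]
      intro a a'
      simp only [hu, Finsupp.tsub_apply]
      have h1 : (p.1 a - q.1 a) + q.1 a = p.1 a := by have := hle1 a; omega
      have h2 : (p.1 a' - q.1 a') + q.1 a' = p.1 a' := by have := hle1 a'; omega
      have step : (p.1 a - q.1 a) + q.1 a ≡ (p.1 a' - q.1 a') + q.1 a [MOD e] := by
        rw [h1]
        calc p.1 a ≡ p.1 a' [MOD e] := hpS a a'
          _ = (p.1 a' - q.1 a') + q.1 a' := h2.symm
          _ ≡ (p.1 a' - q.1 a') + q.1 a [MOD e] :=
            Nat.ModEq.add_left _ ((hqS a' a))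
      exact Nat.ModEq.add_right_cancel' _ step
    obtain ⟨u', hu'⟩ := huS
    refine ⟨u', hinj ?_⟩
    rw [map_add, hu', ← hq, ← hpu, hp]
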